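/- arXiv:2208.14257 — 4 statements merged into one kernel-verified Lean document; each statement's English description precedes it below -/
import Mathlib

section
/- The 4×4 matrix H(t) with diagonal (-3,-1,1,3), superdiagonal (√(3-3t), 2√(1-t), √(3-3t)) and subdiagonal (-√(3-3t), -2√(1-t), -√(3-3t)) has characteristic polynomial E⁴ - 10t E² + 9t², and hence for 0 ≤ t ≤ 1 its eigenvalues are √t, -√t, 3√t, -3√t. -/
open Real Matrix

theorem stmt_3_aux (t : ℝ) (ht : t ≤ 1) (E : ℝ) :
    Matrix.det (E • (1 : Matrix (Fin 4) (Fin 4) ℝ) -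
      !![-3, Real.sqrt (3 - 3*t), 0, 0;
         -Real.sqrt (3 - 3*t), -1, 2 * Real.sqrt (1 - t), 0;
         0, -(2 * Real.sqrt (1 - t)), 1, Real.sqrt (3 - 3*t);
         0, 0, -Real.sqrt (3 - 3*t), 3]) = E^4 - 10*t*E^2 + 9*t^2 := by
  have ha : Real.sqrt (3 - 3*t) ^ 2 = 3 - 3*t := Real.sq_sqrt (by linarith)
  have hb : Real.sqrt (1 - t) ^ 2 = 1 - t := Real.sq_sqrt (by linarith)
  rw [Matrix.det_succ_row_zero]
  simp [Fin.sum_univ_succ, Matrix.det_fin_three, Matrix.one_apply, Fin.succAbove]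
  linear_combination (2*E^2 + 6 + Real.sqrt (3-3*t)^2 + (3-3*t)) * ha + (4*E^2 - 36) * hb

/-- The 4×4 matrix `H(t)` with diagonal `(-3,-1,1,3)`, superdiagonal
`(√(3-3t), 2√(1-t), √(3-3t))` and antisymmetric subdiagonal has characteristic
polynomial `E⁴ - 10t E² + 9t²`; hence for `0 ≤ t ≤ 1` its eigenvalues are
`√t, -√t, 3√t, -3√t`. -/
theorem stmt_3 (t : ℝ) (H : Matrix (Fin 4) (Fin 4) ℝ)
    (hH : H = !![-3, Real.sqrt (3 - 3*t), 0, 0;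
                 -Real.sqrt (3 - 3*t), -1, 2 * Real.sqrt (1 - t), 0;
                 0, -(2 * Real.sqrt (1 - t)), 1, Real.sqrt (3 - 3*t);
                 0, 0, -Real.sqrt (3 - 3*t), 3]) :
    (t ≤ 1 →
      ∀ E : ℝ, Matrix.det (E • (1 : Matrix (Fin 4) (Fin 4) ℝ) - H)
          = E^4 - 10*t*E^2 + 9*t^2) ∧
    (0 ≤ t → t ≤ 1 →
      Matrix.det ((Real.sqrt t) • (1 : Matrix (Fin 4) (Fin 4) ℝ) - H) = 0 ∧
      Matrix.det ((-Real.sqrt t) • (1 : Matrix (Fin 4) (Fin 4) ℝ) - H) = 0 ∧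
      Matrix.det ((3 * Real.sqrt t) • (1 : Matrix (Fin 4) (Fin 4) ℝ) - H) = 0 ∧
      Matrix.det ((-(3 * Real.sqrt t)) • (1 : Matrix (Fin 4) (Fin 4) ℝ) - H) = 0) := by
  subst hH
  refine ⟨fun ht E => stmt_3_aux t ht E, fun ht0 ht1 => ?_⟩
  have hs : Real.sqrt t ^ 2 = t := Real.sq_sqrt ht0
  refine ⟨?_, ?_, ?_, ?_⟩ <;> rw [stmt_3_aux t ht1] <;> nlinarith [hs]
end

section
/- The explicit 4×4 transition matrix Q with rows (-6, 6, -3, 1), (-6√3, 4√3, -√3, 0), (-6√3, 2√3, 0, 0), (-6, 0, 0, 0) is invertible and satisfies H·Q = Q·J, where H is the EP(4) Hamiltonian with diagonal (-3,-1,1,3) and off-diagonal elements ±√3, ±2, ±√3, and J is the 4×4 nilpotent Jordan block with ones on the superdiagonal. -/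
open Real Matrix

/-- The explicit transition matrix `Q` is invertible and satisfies
`H·Q = Q·J`, where `H` is the EP(4) Hamiltonian and `J` the nilpotent
4×4 Jordan block. -/
theorem stmt_5 (H Q J : Matrix (Fin 4) (Fin 4) ℝ)
    (hH : H = !![-3, Real.sqrt 3, 0, 0;
                 -Real.sqrt 3, -1, 2, 0;
                 0, -2, 1, Real.sqrt 3;
                 0, 0, -Real.sqrt 3, 3])
    (hQ : Q = !![-6, 6, -3, 1;
                 -6 * Real.sqrt 3, 4 * Real.sqrt 3, -Real.sqrt 3, 0;
                 -6 * Real.sqrt 3, 2 * Real.sqrt 3, 0, 0;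
                 -6, 0, 0, 0])
    (hJ : J = !![0, 1, 0, 0;
                 0, 0, 1, 0;
                 0, 0, 0, 1;
                 0, 0, 0, 0]) :
    Q.det ≠ 0 ∧ H * Q = Q * J := by
  have h3 : Real.sqrt 3 * Real.sqrt 3 = 3 :=
    Real.mul_self_sqrt (by norm_num)
  subst hH hQ hJ
  constructor
  · rw [Matrix.det_succ_row_zero]
    simp [Fin.sum_univ_succ, Matrix.det_fin_three]
    simp (config := {decide := true}) [Fin.succAbove]
  · ext i j
    fin_cases i <;> fin_cases j <;>
      simp [Matrix.mul_apply, Fin.sum_univ_four, Matrix.vecHead, Matrix.vecTail] <;> nlinarith [h3]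
end

section
/- If H is the N×N matrix with diagonal entries H_{kk} = 2k - N - 1 for k = 1,...,N, superdiagonal entries H_{k,k+1} = √(k(N-k)), and subdiagonal entries H_{k+1,k} = -√(k(N-k)), then H is nilpotent of index N: H^N = 0 and H^{N-1} ≠ 0. -/
open Matrix

/- Auxiliary definitions: the integer tridiagonal matrix `Mm`, the Pascal matrix `Pp`,
the weighted shift `Tt`, the diagonal `dD`, and `Hmat` (a copy of the statement's matrix). -/

private noncomputable def Hmat (N : ℕ) : Matrix (Fin N) (Fin N) ℝ := fun i j =>
  if j.val = i.val + 1 then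
    Real.sqrt ((i.val + 1) * (N - (i.val + 1)))
  else if i.val = j.val + 1 then
    -Real.sqrt ((j.val + 1) * (N - (j.val + 1)))
  else if i = j then
    (2 * (i.val + 1) : ℝ) - N - 1
  else 0

private def Mm (N : ℕ) : Matrix (Fin N) (Fin N) ℝ := fun i j =>
  if j.val = i.val + 1 then ((i.val : ℝ) + 1)
  else if i.val = j.val + 1 then ((i.val : ℝ) - N)
  else if i = j then (2 * (i.val + 1) : ℝ) - N - 1
  else 0

private def Pp (N : ℕ) : Matrix (Fin N) (Fin N) ℝ := fun i j =>
  (Nat.choose j.val i.val : ℝ)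

private def Tt (N : ℕ) : Matrix (Fin N) (Fin N) ℝ := fun i j =>
  if i.val = j.val + 1 then ((j.val : ℝ) + 1 - N) else 0

private noncomputable def dD (N : ℕ) : Matrix (Fin N) (Fin N) ℝ :=
  Matrix.diagonal fun i => Real.sqrt (Nat.choose (N - 1) i.val)

/- Scalar lemmas. -/

private lemma sqrt_nat_mul (a b c e : ℕ) (h : a * b = c * c * e) :
    Real.sqrt a * Real.sqrt b = (c : ℝ) * Real.sqrt e := by
  rw [← Real.sqrt_mul (Nat.cast_nonneg a), ← Nat.cast_mul, h]
  have : ((c * c * e : ℕ) : ℝ) = (c : ℝ) ^ 2 * e := by push_cast; ring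
  rw [this, Real.sqrt_mul (by positivity), Real.sqrt_sq (by positivity)]

private lemma sqrt_aux1 (N i : ℕ) (h : i + 1 < N) :
    Real.sqrt (Nat.choose (N - 1) i) * Real.sqrt (((i : ℝ) + 1) * ((N : ℝ) - ((i : ℝ) + 1)))
      = ((i : ℝ) + 1) * Real.sqrt (Nat.choose (N - 1) (i + 1)) := by
  have h1 : ((i : ℝ) + 1) * ((N : ℝ) - ((i : ℝ) + 1)) = (((i + 1) * (N - (i + 1)) : ℕ) : ℝ) := by
    push_cast [Nat.cast_sub h.le]; ring
  have h2 : Nat.choose (N - 1) i * ((i + 1) * (N - (i + 1)))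
      = (i + 1) * (i + 1) * Nat.choose (N - 1) (i + 1) := by
    have e := Nat.choose_succ_right_eq (N - 1) i
    have h3 : N - (i + 1) = N - 1 - i := by omega
    rw [h3]
    calc Nat.choose (N - 1) i * ((i + 1) * (N - 1 - i))
        = (i + 1) * (Nat.choose (N - 1) i * (N - 1 - i)) := by ring
      _ = (i + 1) * (Nat.choose (N - 1) (i + 1) * (i + 1)) := by rw [e]
      _ = (i + 1) * (i + 1) * Nat.choose (N - 1) (i + 1) := by ring
  rw [h1, sqrt_nat_mul _ _ (i + 1) _ h2]
  push_cast; ring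

private lemma sqrt_aux2 (N i : ℕ) (h : i + 1 < N) :
    Real.sqrt (Nat.choose (N - 1) (i + 1)) * Real.sqrt (((i : ℝ) + 1) * ((N : ℝ) - ((i : ℝ) + 1)))
      = ((N : ℝ) - ((i : ℝ) + 1)) * Real.sqrt (Nat.choose (N - 1) i) := by
  have h1 : ((i : ℝ) + 1) * ((N : ℝ) - ((i : ℝ) + 1)) = (((i + 1) * (N - (i + 1)) : ℕ) : ℝ) := by
    push_cast [Nat.cast_sub h.le]; ring
  have h2 : Nat.choose (N - 1) (i + 1) * ((i + 1) * (N - (i + 1)))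
      = (N - (i + 1)) * (N - (i + 1)) * Nat.choose (N - 1) i := by
    have e := Nat.choose_succ_right_eq (N - 1) i
    have h3 : N - (i + 1) = N - 1 - i := by omega
    rw [h3]
    calc Nat.choose (N - 1) (i + 1) * ((i + 1) * (N - 1 - i))
        = (Nat.choose (N - 1) (i + 1) * (i + 1)) * (N - 1 - i) := by ring
      _ = (Nat.choose (N - 1) i * (N - 1 - i)) * (N - 1 - i) := by rw [e]
      _ = (N - 1 - i) * (N - 1 - i) * Nat.choose (N - 1) i := by ring
  rw [h1, sqrt_nat_mul _ _ (N - (i + 1)) _ h2]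
  have : ((N - (i + 1) : ℕ) : ℝ) = (N : ℝ) - ((i : ℝ) + 1) := by
    push_cast [Nat.cast_sub h.le]; ring
  rw [this]

private lemma choose_aux (j i : ℕ) :
    ((i : ℝ) + 1) * (Nat.choose j (i + 1)) = ((j : ℝ) - i) * Nat.choose j i := by
  rcases le_or_gt i j with h | h
  · have h1 := Nat.choose_succ_right_eq j i
    have h2 : ((Nat.choose j (i + 1) * (i + 1) : ℕ) : ℝ)
        = ((Nat.choose j i * (j - i) : ℕ) : ℝ) := by exact_mod_cast congrArg Nat.cast h1
    push_cast [Nat.cast_sub h] at h2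
    linear_combination h2
  · have h1 : Nat.choose j i = 0 := Nat.choose_eq_zero_of_lt h
    have h2 : Nat.choose j (i + 1) = 0 := Nat.choose_eq_zero_of_lt (by omega)
    simp [h1, h2]

/- `D * H = M * D`. -/
private lemma lem_DH (N : ℕ) : dD N * Hmat N = Mm N * dD N := by
  ext i j
  simp only [dD]
  rw [Matrix.diagonal_mul, Matrix.mul_diagonal]
  by_cases h1 : j.val = i.val + 1
  · have hi : i.val + 1 < N := h1 ▸ j.isLt
    simp only [Hmat, Mm, if_pos h1, h1]
    exact sqrt_aux1 N i.val hi
  · by_cases h2 : i.val = j.val + 1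
    · have hj : j.val + 1 < N := h2 ▸ i.isLt
      simp only [Hmat, Mm, if_neg h1, if_pos h2]
      rw [h2]
      have := sqrt_aux2 N j.val hj
      push_cast
      linear_combination -this
    · by_cases h3 : i = j
      · subst h3
        simp only [Hmat, Mm, if_neg h1, if_neg h2, if_pos rfl]
        ring
      · simp only [Hmat, Mm, if_neg h1, if_neg h2, if_neg h3]
        ring

/- `M * P = P * T`. -/
private lemma lem_MP (N : ℕ) (hN : 0 < N) : Mm N * Pp N = Pp N * Tt N := by
  ext i j
  rw [Matrix.mul_apply, Matrix.mul_apply]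
  have hMsplit : ∀ k : Fin N, Mm N i k * Pp N k j =
      (if k.val = i.val + 1 then ((i.val : ℝ) + 1) * Nat.choose j.val k.val else 0)
      + (if i = k then ((2 * (i.val + 1) : ℝ) - N - 1) * Nat.choose j.val k.val else 0)
      + (if i.val = k.val + 1 then ((i.val : ℝ) - N) * Nat.choose j.val k.val else 0) := by
    intro k
    show (if k.val = i.val + 1 then ((i.val : ℝ) + 1)
      else if i.val = k.val + 1 then ((i.val : ℝ) - N)
      else if i = k then (2 * (i.val + 1) : ℝ) - N - 1
      else 0) * (Nat.choose j.val k.val : ℝ) = _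
    by_cases h1 : k.val = i.val + 1
    · have h2 : ¬ i.val = k.val + 1 := by omega
      have h3 : ¬ i = k := by intro h; rw [h] at h1; omega
      rw [if_pos h1, if_pos h1, if_neg h3, if_neg h2]; ring
    · by_cases h2 : i.val = k.val + 1
      · have h3 : ¬ i = k := by intro h; rw [h] at h2; omega
        rw [if_neg h1, if_neg h1, if_pos h2, if_pos h2, if_neg h3]; ring
      · by_cases h3 : i = k
        · subst h3
          rw [if_neg h1, if_neg h1, if_neg h2, if_neg h2, if_pos rfl, if_pos rfl]; ring
        · rw [if_neg h1, if_neg h1, if_neg h2, if_neg h2, if_neg h3, if_neg h3]; ring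
  rw [Finset.sum_congr rfl fun k _ => hMsplit k]
  rw [Finset.sum_add_distrib, Finset.sum_add_distrib]
  have hS1 : (∑ k : Fin N, if k.val = i.val + 1
        then ((i.val : ℝ) + 1) * Nat.choose j.val k.val else 0)
      = ((i.val : ℝ) + 1) * Nat.choose j.val (i.val + 1) := by
    by_cases hi : i.val + 1 < N
    · rw [Finset.sum_eq_single (⟨i.val + 1, hi⟩ : Fin N)]
      · simp
      · intro b _ hb
        rw [if_neg]
        intro hb'; exact hb (Fin.ext hb')
      · intro h; exact absurd (Finset.mem_univ _) h
    · have hz : Nat.choose j.val (i.val + 1) = 0 :=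
        Nat.choose_eq_zero_of_lt (by have := j.isLt; omega)
      rw [hz, Nat.cast_zero, mul_zero]
      apply Finset.sum_eq_zero
      intro k _
      rw [if_neg]
      have := k.isLt; omega
  have hS2 : (∑ k : Fin N, if i = k
        then ((2 * (i.val + 1) : ℝ) - N - 1) * Nat.choose j.val k.val else 0)
      = ((2 * (i.val + 1) : ℝ) - N - 1) * Nat.choose j.val i.val := by
    rw [Finset.sum_eq_single i]
    · simp
    · intro b _ hb
      rw [if_neg (fun h => hb h.symm)]
    · intro h; exact absurd (Finset.mem_univ _) h
  have hS3 : (∑ k : Fin N, if i.val = k.val + 1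
        then ((i.val : ℝ) - N) * Nat.choose j.val k.val else 0)
      = (if 1 ≤ i.val then ((i.val : ℝ) - N) * Nat.choose j.val (i.val - 1) else 0) := by
    by_cases hi : 1 ≤ i.val
    · rw [if_pos hi, Finset.sum_eq_single (⟨i.val - 1, by omega⟩ : Fin N)]
      · rw [if_pos (by simp; omega)]
      · intro b _ hb
        rw [if_neg]
        intro hb'; exact hb (Fin.ext (by simp; omega))
      · intro h; exact absurd (Finset.mem_univ _) h
    · rw [if_neg hi]
      apply Finset.sum_eq_zero
      intro k _
      rw [if_neg (by omega)]
  have hRHS : (∑ k : Fin N, Pp N i k * Tt N k j)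
      = ((j.val : ℝ) + 1 - N) * Nat.choose (j.val + 1) i.val := by
    by_cases hj : j.val + 1 < N
    · rw [Finset.sum_eq_single (⟨j.val + 1, hj⟩ : Fin N)]
      · show (Nat.choose (j.val + 1) i.val : ℝ) * (if (j.val + 1) = j.val + 1 then _ else 0) = _
        rw [if_pos rfl, mul_comm]
      · intro b _ hb
        show (Nat.choose b.val i.val : ℝ) * (if b.val = j.val + 1 then _ else 0) = 0
        rw [if_neg, mul_zero]
        intro hb'; exact hb (Fin.ext hb')
      · intro h; exact absurd (Finset.mem_univ _) h
    · have hc : ((j.val : ℝ) + 1 - N) = 0 := by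
        have : j.val + 1 = N := by have := j.isLt; omega
        have : ((j.val + 1 : ℕ) : ℝ) = (N : ℝ) := by rw [this]
        push_cast at this; linarith
      rw [hc, zero_mul]
      apply Finset.sum_eq_zero
      intro k _
      show (Nat.choose k.val i.val : ℝ) * (if k.val = j.val + 1 then _ else 0) = 0
      rw [if_neg (by have := k.isLt; omega), mul_zero]
  rw [hS1, hS2, hS3, hRHS]
  -- scalar combinatorial identity
  rcases Nat.eq_zero_or_pos i.val with h0 | h0
  · simp only [h0]
    rw [if_neg (by omega)]
    simp [Nat.choose_one_right, Nat.choose_zero_right]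
    push_cast
    ring
  · have h0' : 1 ≤ i.val := h0
    rw [if_pos h0']
    obtain ⟨k, hk⟩ : ∃ k, i.val = k + 1 := ⟨i.val - 1, by omega⟩
    rw [hk]
    simp only [Nat.add_sub_cancel]
    have h1 := choose_aux j.val (k + 1)
    have h2 := choose_aux j.val k
    have h3 : ((Nat.choose (j.val + 1) (k + 1) : ℕ) : ℝ)
        = Nat.choose j.val k + Nat.choose j.val (k + 1) := by
      have := Nat.choose_succ_succ j.val k
      exact_mod_cast congrArg Nat.cast this
    push_cast at h1 h2 h3 ⊢
    linear_combination h1 + h2 + ((N : ℝ) - (j.val : ℝ) - 1) * h3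

/- Powers of `T`. -/
private lemma T_pow_supp (N : ℕ) :
    ∀ m (i j : Fin N), ((Tt N) ^ m) i j ≠ 0 → j.val + m ≤ i.val := by
  intro m
  induction m with
  | zero =>
      intro i j h
      rw [pow_zero] at h
      by_cases hij : i = j
      · subst hij; omega
      · exact absurd (Matrix.one_apply_ne hij) h
  | succ n ih =>
      intro i j h
      rw [pow_succ, Matrix.mul_apply] at h
      obtain ⟨k, _, hk⟩ := Finset.exists_ne_zero_of_sum_ne_zero h
      have h1 : ((Tt N) ^ n) i k ≠ 0 := fun hz => hk (by rw [hz, zero_mul])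
      have h2 : (Tt N) k j ≠ 0 := fun hz => hk (by rw [hz, mul_zero])
      have h3 : k.val = j.val + 1 := by
        by_contra hc
        exact h2 (if_neg hc)
      have := ih i k h1
      omega

private lemma T_pow_entry (N : ℕ) :
    ∀ m (i j : Fin N), i.val = j.val + m →
      ((Tt N) ^ m) i j = ∏ t ∈ Finset.range m, ((j.val : ℝ) + t + 1 - N) := by
  intro m
  induction m with
  | zero =>
      intro i j hij
      have : i = j := Fin.ext (by omega)
      subst this
      simp
  | succ n ih =>
      intro i j hij
      have hk0 : j.val + 1 < N := by have := i.isLt; omega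
      rw [pow_succ, Matrix.mul_apply]
      rw [Finset.sum_eq_single (⟨j.val + 1, hk0⟩ : Fin N)]
      · have hih := ih i ⟨j.val + 1, hk0⟩ (by simp; omega)
        rw [hih]
        show _ * (if (j.val + 1) = j.val + 1 then ((j.val : ℝ) + 1 - N) else 0) = _
        rw [if_pos rfl, Finset.prod_range_succ']
        congr 1
        · apply Finset.prod_congr rfl
          intro t _
          simp only [Fin.val_mk]
          push_cast
          ring
        · push_cast
          ring
      · intro b _ hb
        have : (Tt N) b j = 0 := by
          apply if_neg
          intro hb'; exact hb (Fin.ext hb')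
        rw [this, mul_zero]
      · intro h; exact absurd (Finset.mem_univ _) h

private lemma T_pow_N (N : ℕ) : (Tt N) ^ N = 0 := by
  ext i j
  by_contra h
  have := T_pow_supp N N i j h
  have := i.isLt
  omega

private lemma T_pow_pred_ne (N : ℕ) (hN : 0 < N) : (Tt N) ^ (N - 1) ≠ 0 := by
  intro h
  have hi : N - 1 < N := by omega
  have he := T_pow_entry N (N - 1) ⟨N - 1, hi⟩ ⟨0, hN⟩ (by simp)
  rw [h] at he
  have : (0 : ℝ) = ∏ t ∈ Finset.range (N - 1), (((0 : ℕ) : ℝ) + t + 1 - N) := he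
  have hne : ∏ t ∈ Finset.range (N - 1), (((0 : ℕ) : ℝ) + t + 1 - N) ≠ 0 := by
    apply Finset.prod_ne_zero_iff.mpr
    intro t ht
    have htn : t + 1 < N := by
      have := Finset.mem_range.mp ht; omega
    have : ((t : ℝ) + 1) < N := by exact_mod_cast htn
    push_cast
    intro hc
    linarith
  exact hne this.symm

/-- The `N×N` tridiagonal matrix with `H_{kk} = 2k - N - 1`,
`H_{k,k+1} = √(k(N-k)) = -H_{k+1,k}`, is nilpotent of index exactly `N`:
`H^N = 0` and `H^{N-1} ≠ 0`. -/
theorem stmt_8 (N : ℕ) (hN : 0 < N) (H : Matrix (Fin N) (Fin N) ℝ)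
    (hH : H = fun i j =>
      if j.val = i.val + 1 then
        Real.sqrt ((i.val + 1) * (N - (i.val + 1)))
      else if i.val = j.val + 1 then
        -Real.sqrt ((j.val + 1) * (N - (j.val + 1)))
      else if i = j then
        (2 * (i.val + 1) : ℝ) - N - 1
      else 0) :
    H ^ N = 0 ∧ H ^ (N - 1) ≠ 0 := by
  have hHeq : H = Hmat N := hH
  subst hHeq
  -- invertibility of P
  have hPtri : (Pp N).BlockTriangular id := by
    intro i j hij
    show ((Nat.choose j.val i.val : ℕ) : ℝ) = 0
    have hij' : j.val < i.val := hij
    rw [Nat.choose_eq_zero_of_lt hij', Nat.cast_zero]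
  have hPdet : (Pp N).det = 1 := by
    rw [Matrix.det_of_upperTriangular hPtri]
    apply Finset.prod_eq_one
    intro i _
    show ((Nat.choose i.val i.val : ℕ) : ℝ) = 1
    rw [Nat.choose_self, Nat.cast_one]
  have hPunit : IsUnit (Pp N).det := by rw [hPdet]; exact isUnit_one
  -- invertibility of D
  have hDdet : (dD N).det ≠ 0 := by
    rw [dD, Matrix.det_diagonal]
    apply Finset.prod_ne_zero_iff.mpr
    intro i _
    apply ne_of_gt
    apply Real.sqrt_pos.mpr
    have : 0 < Nat.choose (N - 1) i.val := Nat.choose_pos (by have := i.isLt; omega)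
    exact_mod_cast this
  -- Q := P⁻¹ * D conjugates H to T
  set Q : Matrix (Fin N) (Fin N) ℝ := (Pp N)⁻¹ * dD N with hQ
  have hQdet : IsUnit Q.det := by
    rw [hQ, Matrix.det_mul, Matrix.det_nonsing_inv, hPdet, Ring.inverse_one, one_mul]
    exact isUnit_iff_ne_zero.mpr hDdet
  have hPinvM : (Pp N)⁻¹ * Mm N = Tt N * (Pp N)⁻¹ := by
    have h1 : (Pp N)⁻¹ * (Mm N * Pp N) * (Pp N)⁻¹ = (Pp N)⁻¹ * (Pp N * Tt N) * (Pp N)⁻¹ := by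
      rw [lem_MP N hN]
    rw [Matrix.nonsing_inv_mul_cancel_left _ _ hPunit] at h1
    rwa [Matrix.mul_assoc, Matrix.mul_assoc, Matrix.mul_nonsing_inv _ hPunit,
      Matrix.mul_one] at h1
  have hQH : Q * Hmat N = Tt N * Q := by
    rw [hQ, Matrix.mul_assoc, lem_DH N, ← Matrix.mul_assoc, hPinvM, Matrix.mul_assoc]
  have hpow : ∀ m, Q * (Hmat N) ^ m = (Tt N) ^ m * Q := by
    intro m
    induction m with
    | zero => simp
    | succ n ih =>
        rw [pow_succ, pow_succ, ← Matrix.mul_assoc, ih, Matrix.mul_assoc, hQH,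
          ← Matrix.mul_assoc]
  constructor
  · have h1 : Q * (Hmat N) ^ N = 0 := by rw [hpow, T_pow_N, Matrix.zero_mul]
    have h2 := congrArg (fun X => Q⁻¹ * X) h1
    simpa [← Matrix.mul_assoc, Matrix.nonsing_inv_mul _ hQdet] using h2
  · intro h0
    apply T_pow_pred_ne N hN
    have h1 : (Tt N) ^ (N - 1) * Q = 0 := by rw [← hpow, h0, Matrix.mul_zero]
    have h2 := congrArg (fun X => X * Q⁻¹) h1
    simpa [Matrix.mul_assoc, Matrix.mul_nonsing_inv _ hQdet] using h2
end

section
/- For the 6×6 tridiagonal matrix C with diagonal (−5,−3,−1,1,3,5), superdiagonal (√5, √8, √9, √8, √5), and antisymmetric subdiagonal, C is nilpotent of index 6: C⁶ = 0 and C⁵ ≠ 0 (the EP(6) degeneracy of the decoupled t = 7 Hamiltonian at N = 8). -/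
open Real Matrix

@[simp] lemma stmt16_cons_val_five {α : Type*} {m : ℕ}
    (x : α) (u : Fin m.succ.succ.succ.succ.succ → α) :
    vecCons x u 5 = vecHead (vecTail (vecTail (vecTail (vecTail u)))) :=
  rfl

set_option maxHeartbeats 2000000 in
lemma stmt_16_aux (x y : ℝ) (hx : x * x = 5) (hy : y * y = 8) :
    (!![-5, x, 0, 0, 0, 0;
        -x, -3, y, 0, 0, 0;
        0, -y, -1, 3, 0, 0;
        0, 0, -3, 1, y, 0;
        0, 0, 0, -y, 3, x;
        0, 0, 0, 0, -x, 5] : Matrix (Fin 6) (Fin 6) ℝ) ^ 6 = 0 ∧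
    (!![-5, x, 0, 0, 0, 0;
        -x, -3, y, 0, 0, 0;
        0, -y, -1, 3, 0, 0;
        0, 0, -3, 1, y, 0;
        0, 0, 0, -y, 3, x;
        0, 0, 0, 0, -x, 5] : Matrix (Fin 6) (Fin 6) ℝ) ^ 5 ≠ 0 := by
  have hx2 : x ^ 2 = 5 := by rw [pow_two, hx]
  have hy2 : y ^ 2 = 8 := by rw [pow_two, hy]
  have hB : (!![-5, x, 0, 0, 0, 0;
        -x, -3, y, 0, 0, 0;
        0, -y, -1, 3, 0, 0;
        0, 0, -3, 1, y, 0;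
        0, 0, 0, -y, 3, x;
        0, 0, 0, 0, -x, 5] : Matrix (Fin 6) (Fin 6) ℝ) *
      !![-5, x, 0, 0, 0, 0;
        -x, -3, y, 0, 0, 0;
        0, -y, -1, 3, 0, 0;
        0, 0, -3, 1, y, 0;
        0, 0, 0, -y, 3, x;
        0, 0, 0, 0, -x, 5] =
      !![20, -8*x, x*y, 0, 0, 0;
         8*x, -4, -4*y, 3*y, 0, 0;
         x*y, 4*y, -16, 0, 3*y, 0;
         0, 3*y, 0, -16, 4*y, x*y;
         0, 0, 3*y, -4*y, -4, 8*x;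
         0, 0, 0, x*y, -8*x, 20] := by
    ext i j
    fin_cases i <;> fin_cases j <;>
      simp [Matrix.mul_apply, Fin.sum_univ_six, Matrix.vecHead, Matrix.vecTail] <;>
      ring_nf <;> simp only [hx2, hy2] <;> ring
  have hB2 : (!![20, -8*x, x*y, 0, 0, 0;
         8*x, -4, -4*y, 3*y, 0, 0;
         x*y, 4*y, -16, 0, 3*y, 0;
         0, 3*y, 0, -16, 4*y, x*y;
         0, 0, 3*y, -4*y, -4, 8*x;
         0, 0, 0, x*y, -8*x, 20] : Matrix (Fin 6) (Fin 6) ℝ) *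
      !![20, -8*x, x*y, 0, 0, 0;
         8*x, -4, -4*y, 3*y, 0, 0;
         x*y, 4*y, -16, 0, 3*y, 0;
         0, 3*y, 0, -16, 4*y, x*y;
         0, 0, 3*y, -4*y, -4, 8*x;
         0, 0, 0, x*y, -8*x, 20] =
      !![120, -96*x, 36*x*y, -24*x*y, 24*x, 0;
         96*x, -360, 120*y, -60*y, 0, 24*x;
         36*x*y, -120*y, 240, 0, -60*y, 24*x*y;
         24*x*y, -60*y, 0, 240, -120*y, 36*x*y;
         24*x, 0, -60*y, 120*y, -360, 96*x;
         0, 24*x, -24*x*y, 36*x*y, -96*x, 120] := by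
    ext i j
    fin_cases i <;> fin_cases j <;>
      simp [Matrix.mul_apply, Fin.sum_univ_six, Matrix.vecHead, Matrix.vecTail] <;>
      ring_nf <;> simp only [hx2, hy2] <;> ring
  have h0 : (!![120, -96*x, 36*x*y, -24*x*y, 24*x, 0;
         96*x, -360, 120*y, -60*y, 0, 24*x;
         36*x*y, -120*y, 240, 0, -60*y, 24*x*y;
         24*x*y, -60*y, 0, 240, -120*y, 36*x*y;
         24*x, 0, -60*y, 120*y, -360, 96*x;
         0, 24*x, -24*x*y, 36*x*y, -96*x, 120] : Matrix (Fin 6) (Fin 6) ℝ) *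
      !![20, -8*x, x*y, 0, 0, 0;
         8*x, -4, -4*y, 3*y, 0, 0;
         x*y, 4*y, -16, 0, 3*y, 0;
         0, 3*y, 0, -16, 4*y, x*y;
         0, 0, 3*y, -4*y, -4, 8*x;
         0, 0, 0, x*y, -8*x, 20] = 0 := by
    ext i j
    fin_cases i <;> fin_cases j <;>
      simp [Matrix.mul_apply, Fin.sum_univ_six, Matrix.vecHead, Matrix.vecTail] <;>
      ring_nf <;> simp only [hx2, hy2] <;> ring
  have e2 : (!![-5, x, 0, 0, 0, 0;
        -x, -3, y, 0, 0, 0;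
        0, -y, -1, 3, 0, 0;
        0, 0, -3, 1, y, 0;
        0, 0, 0, -y, 3, x;
        0, 0, 0, 0, -x, 5] : Matrix (Fin 6) (Fin 6) ℝ) ^ 2 =
      !![20, -8*x, x*y, 0, 0, 0;
         8*x, -4, -4*y, 3*y, 0, 0;
         x*y, 4*y, -16, 0, 3*y, 0;
         0, 3*y, 0, -16, 4*y, x*y;
         0, 0, 3*y, -4*y, -4, 8*x;
         0, 0, 0, x*y, -8*x, 20] := by rw [sq, hB]
  constructor
  · show _ ^ (2*3) = (0 : Matrix (Fin 6) (Fin 6) ℝ)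
    rw [pow_mul, e2, pow_succ, sq, hB2, h0]
  · intro h
    have h' : (!![-5, x, 0, 0, 0, 0;
        -x, -3, y, 0, 0, 0;
        0, -y, -1, 3, 0, 0;
        0, 0, -3, 1, y, 0;
        0, 0, 0, -y, 3, x;
        0, 0, 0, 0, -x, 5] : Matrix (Fin 6) (Fin 6) ℝ) ^ (2*2+1) = 0 := h
    rw [pow_succ, pow_mul, e2, sq, hB2] at h'
    have h05 := congrFun (congrFun h' 0) 5
    simp [Matrix.mul_apply, Fin.sum_univ_six, Matrix.vecHead, Matrix.vecTail] at h05
    nlinarith [h05, hx]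

/-- The 6×6 tridiagonal matrix `C` with diagonal `(-5,-3,-1,1,3,5)`,
superdiagonal `(√5, √8, √9, √8, √5)` and antisymmetric subdiagonal is
nilpotent of index 6: `C⁶ = 0` and `C⁵ ≠ 0` (the EP(6) degeneracy of the
decoupled `t = 7` Hamiltonian at `N = 8`). -/
theorem stmt_16 (C : Matrix (Fin 6) (Fin 6) ℝ)
    (hC : C = !![-5, Real.sqrt 5, 0, 0, 0, 0;
                 -Real.sqrt 5, -3, Real.sqrt 8, 0, 0, 0;
                 0, -Real.sqrt 8, -1, Real.sqrt 9, 0, 0;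
                 0, 0, -Real.sqrt 9, 1, Real.sqrt 8, 0;
                 0, 0, 0, -Real.sqrt 8, 3, Real.sqrt 5;
                 0, 0, 0, 0, -Real.sqrt 5, 5]) :
    C ^ 6 = 0 ∧ C ^ 5 ≠ 0 := by
  have h9 : Real.sqrt 9 = 3 := by
    rw [show (9:ℝ) = 3 ^ 2 by norm_num, Real.sqrt_sq (by norm_num : (0:ℝ) ≤ 3)]
  rw [hC, h9]
  exact stmt_16_aux _ _ (Real.mul_self_sqrt (by norm_num)) (Real.mul_self_sqrt (by norm_num))
end
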